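/- The function f_k from the paper is invariant under independent translation of the points with odd index: for any v ∈ ℝ² and points z_1,…,z_{2k} ∈ ℝ², defining f_k(z_1,…,z_{2k}) = Σ_{i=1}^{2k} ω(z_i, z_{i+1}) with indices read cyclically, one has f_k(z_1+v, z_2, z_3+v, z_4, …, z_{2k-1}+v, z_{2k}) = f_k(z_1,…,z_{2k}). -/

import Mathlib

/-- The standard symplectic form on `ℝ²`. -/
def omega (p q : ℝ × ℝ) : ℝ := p.1 * q.2 - p.2 * q.1

/-- The cyclic sum `f_k(z_1,…,z_{2k}) = Σ ω(z_i, z_{i+1})`, indices read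
cyclically modulo `2k`. -/
def fk (k : ℕ) (z : Fin (2 * k) → ℝ × ℝ) : ℝ :=
  ∑ i : Fin (2 * k), omega (z i) (z ⟨((i : ℕ) + 1) % (2 * k), Nat.mod_lt _ i.pos⟩)

/-- `f_k` is invariant under translating every other point by a fixed
vector `v`. -/
theorem fk_translation_invariant (k : ℕ) (hk : 1 ≤ k)
    (z : Fin (2 * k) → ℝ × ℝ) (v : ℝ × ℝ) :
    fk k (fun i => if Even (i : ℕ) then z i + v else z i) = fk k z := by
  haveI : NeZero (2 * k) := ⟨by omega⟩
  have h2 : 1 < 2 * k := by omega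
  have hval : ∀ i : Fin (2 * k), ((i + 1 : Fin (2 * k)) : ℕ) = ((i : ℕ) + 1) % (2 * k) := by
    intro i
    simp [Fin.add_def, Fin.val_one', Nat.one_mod_eq_one.mpr (by omega : (2*k) ≠ 1)]
  have hsucc : ∀ i : Fin (2 * k),
      (⟨((i : ℕ) + 1) % (2 * k), Nat.mod_lt _ i.pos⟩ : Fin (2 * k)) = i + 1 := by
    intro i; exact Fin.ext (by rw [hval])
  have hpar : ∀ i : Fin (2 * k), Even ((i + 1 : Fin (2 * k)) : ℕ) ↔ ¬ Even (i : ℕ) := by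
    intro i
    rw [hval]
    have : ((i : ℕ) + 1) % (2 * k) % 2 = ((i : ℕ) + 1) % 2 :=
      Nat.mod_mod_of_dvd _ ⟨k, rfl⟩
    simp only [Nat.even_iff, this]
    omega
  unfold fk
  simp only [hsucc]
  have hstep : ∀ i : Fin (2 * k),
      omega (if Even (i : ℕ) then z i + v else z i)
            (if Even (((i : ℕ) + 1) % (2 * k)) then z (i + 1) + v else z (i + 1))
      = omega (z i) (z (i + 1))
        + ((if Even (i : ℕ) then omega v (z (i + 1)) else 0)
          + (if ¬ Even (i : ℕ) then omega (z i) v else 0)) := by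
    intro i
    have hpar' : Even (((i : ℕ) + 1) % (2 * k)) ↔ ¬ Even (i : ℕ) := by
      rw [← hval i]; exact hpar i
    by_cases h : Even (i : ℕ)
    · rw [if_pos h, if_neg (by simp [hpar', h]), if_pos h, if_neg (by simp [h])]
      simp [omega]; ring
    · rw [if_neg h, if_pos (hpar'.mpr h), if_neg h, if_pos h]
      simp [omega]; ring
  rw [Finset.sum_congr rfl (fun i _ => hstep i)]
  rw [Finset.sum_add_distrib, Finset.sum_add_distrib]
  have key : ∑ i : Fin (2 * k), (if Even (i : ℕ) then omega v (z (i + 1)) else 0)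
      = ∑ j : Fin (2 * k), (if ¬ Even (j : ℕ) then omega v (z j) else 0) := by
    apply Fintype.sum_equiv (Equiv.addRight (1 : Fin (2 * k)))
    intro i
    show _ = (if ¬ Even ((i + 1 : Fin (2 * k)) : ℕ) then omega v (z (i + 1)) else 0)
    by_cases h : Even (i : ℕ)
    · rw [if_pos h, if_pos (by simp [hpar i, h])]
    · rw [if_neg h, if_neg (by simp [hpar i, h])]
  rw [key, ← Finset.sum_add_distrib]
  have : ∀ j : Fin (2 * k),
      ((if ¬ Even (j : ℕ) then omega v (z j) else 0)
        + (if ¬ Even (j : ℕ) then omega (z j) v else 0)) = 0 := by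
    intro j
    by_cases h : Even (j : ℕ) <;> simp [h, omega] <;> ring
  rw [Finset.sum_congr rfl (fun j _ => this j), Finset.sum_const, smul_zero, add_zero]
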